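/- Let k be a field and n ≥ 1. Every matrix A ∈ SL_n(k) can be written as A = b₁ · M · b₂ where b₁, b₂ are upper triangular matrices of determinant 1 and M is an invertible monomial matrix of determinant 1 (i.e. M has exactly one nonzero entry in each row and each column); moreover the permutation σ ∈ S_n recording the positions of the nonzero entries of M (M_{i,j} ≠ 0 iff i = σ(j)) is uniquely determined by A. (Gelfand–Naimark's Bruhat decomposition for SL_n.) -/

import Mathlib

/-- A square matrix is upper triangular if all entries below the diagonal vanish. -/
def IsUpperTriangular {k : Type*} [Field k] {n : ℕ} (A : Matrix (Fin n) (Fin n) k) : Prop :=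
  ∀ i j : Fin n, j < i → A i j = 0

namespace BruhatAux

open Matrix hiding IsUpperTriangular
open Finset

variable {k : Type*} [Field k] {n : ℕ}

lemma ut_bt {A : Matrix (Fin n) (Fin n) k} (h : IsUpperTriangular A) :
    A.BlockTriangular id := fun i j hij => h i j hij

lemma ut_det {A : Matrix (Fin n) (Fin n) k} (h : IsUpperTriangular A) :
    A.det = ∏ i, A i i := Matrix.det_of_upperTriangular (ut_bt h)

lemma ut_mul {A B : Matrix (Fin n) (Fin n) k} (hA : IsUpperTriangular A)
    (hB : IsUpperTriangular B) : IsUpperTriangular (A * B) := by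
  intro i j hij
  rw [Matrix.mul_apply]
  apply Finset.sum_eq_zero
  intro p _
  rcases lt_or_ge p i with hp | hp
  · rw [hA i p hp, zero_mul]
  · rw [hB p j (lt_of_lt_of_le hij hp), mul_zero]

lemma ut_one : IsUpperTriangular (1 : Matrix (Fin n) (Fin n) k) := by
  intro i j hij
  exact Matrix.one_apply_ne hij.ne'

lemma ut_inv {A : Matrix (Fin n) (Fin n) k} (hA : IsUpperTriangular A) (hdet : A.det = 1) :
    IsUpperTriangular A⁻¹ := by
  have : Invertible A := A.invertibleOfIsUnitDet (by rw [hdet]; exact isUnit_one)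
  exact fun i j hij => Matrix.blockTriangular_inv_of_blockTriangular (ut_bt hA) hij

lemma ut_diag_ne_zero {A : Matrix (Fin n) (Fin n) k} (hA : IsUpperTriangular A)
    (hdet : A.det = 1) : ∀ i, A i i ≠ 0 := by
  intro i hi
  rw [ut_det hA] at hdet
  have h0 : ∏ j, A j j = 0 := Finset.prod_eq_zero (Finset.mem_univ i) hi
  rw [h0] at hdet
  exact zero_ne_one hdet

/-- elementary row-operation matrix: identity plus column `r` above the diagonal -/
def rowOp (r : Fin n) (d : Fin n → k) : Matrix (Fin n) (Fin n) k :=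
  fun i p => if i = p then 1 else if p = r ∧ i < r then d i else 0

lemma rowOp_ut (r : Fin n) (d : Fin n → k) : IsUpperTriangular (rowOp r d) := by
  intro i j hij
  simp only [rowOp, if_neg hij.ne']
  rw [if_neg]
  rintro ⟨rfl, hir⟩
  exact absurd (hij.trans hir) (lt_irrefl _)

lemma rowOp_diag (r : Fin n) (d : Fin n → k) : ∀ i, rowOp r d i i = 1 := by
  intro i; simp [rowOp]

lemma rowOp_det (r : Fin n) (d : Fin n → k) : (rowOp r d).det = 1 := by
  rw [ut_det (rowOp_ut r d)]
  simp [rowOp_diag]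

lemma rowOp_mul_apply (r : Fin n) (d : Fin n → k) (B : Matrix (Fin n) (Fin n) k)
    (i c : Fin n) : (rowOp r d * B) i c = B i c + (if i < r then d i * B r c else 0) := by
  rw [Matrix.mul_apply]
  by_cases hir : i < r
  · rw [Finset.sum_eq_add_of_mem i r (Finset.mem_univ i) (Finset.mem_univ r) (ne_of_lt hir) ?_]
    · simp [rowOp, (ne_of_lt hir), hir]
    · rintro p _ ⟨hpi, hpr⟩
      simp [rowOp, Ne.symm hpi, hpr]
  · rw [Finset.sum_eq_single i]
    · simp [rowOp, hir]
    · intro p _ hpi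
      simp [rowOp, Ne.symm hpi, hir]
    · intro h; exact absurd (Finset.mem_univ i) h

lemma rowOp_mul_rowOp (r : Fin n) (d e : Fin n → k) :
    rowOp r d * rowOp r e = rowOp r (d + e) := by
  ext i c
  rw [rowOp_mul_apply]
  unfold rowOp
  by_cases hic : i = c
  · subst hic
    by_cases hir : i < r
    · simp [hir, (ne_of_lt hir).symm]
    · simp [hir]
  · by_cases hcr : c = r
    · subst hcr
      by_cases hir : i < c
      · simp [hic, hir, add_comm]
      · simp [hic, hir]
    · simp [hic, hcr, Ne.symm hcr]

lemma rowOp_zero (r : Fin n) : rowOp r (0 : Fin n → k) = 1 := by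
  ext i c
  by_cases hic : i = c <;> simp [rowOp, hic, Matrix.one_apply, Ne.symm]




/-- elementary column-operation matrix: identity plus row `jf` right of the diagonal -/
def colOp (jf : Fin n) (e : Fin n → k) : Matrix (Fin n) (Fin n) k :=
  fun p c => if p = c then 1 else if p = jf ∧ jf < c then e c else 0

lemma colOp_ut (jf : Fin n) (e : Fin n → k) : IsUpperTriangular (colOp jf e) := by
  intro i j hij
  simp only [colOp, if_neg hij.ne']
  rw [if_neg]
  rintro ⟨rfl, hjc⟩
  exact absurd (hjc.trans hij) (lt_irrefl _)

lemma colOp_diag (jf : Fin n) (e : Fin n → k) : ∀ i, colOp jf e i i = 1 := by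
  intro i; simp [colOp]

lemma colOp_det (jf : Fin n) (e : Fin n → k) : (colOp jf e).det = 1 := by
  rw [ut_det (colOp_ut jf e)]
  simp [colOp_diag]

lemma mul_colOp_apply (jf : Fin n) (e : Fin n → k) (B : Matrix (Fin n) (Fin n) k)
    (i c : Fin n) : (B * colOp jf e) i c = B i c + (if jf < c then e c * B i jf else 0) := by
  rw [Matrix.mul_apply]
  by_cases hjc : jf < c
  · rw [Finset.sum_eq_add_of_mem c jf (Finset.mem_univ c) (Finset.mem_univ jf)
      (ne_of_lt hjc).symm ?_]
    · simp [colOp, (ne_of_lt hjc), hjc, mul_comm]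
    · rintro p _ ⟨hpc, hpj⟩
      simp [colOp, hpc, hpj]
  · rw [Finset.sum_eq_single c]
    · simp [colOp, hjc]
    · intro p _ hpc
      simp [colOp, hpc, hjc]
    · intro h; exact absurd (Finset.mem_univ c) h

lemma colOp_mul_colOp (jf : Fin n) (d e : Fin n → k) :
    colOp jf d * colOp jf e = colOp jf (d + e) := by
  ext i c
  rw [mul_colOp_apply]
  unfold colOp
  by_cases hic : i = c
  · subst hic
    by_cases hij : jf < i
    · simp [hij, (ne_of_lt hij), hij.ne']
    · simp [hij]
  · by_cases hij2 : i = jf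
    · subst hij2
      by_cases hjc : i < c
      · simp [hic, hjc]
      · simp [hic, hjc]
    · simp [hic, hij2]

lemma colOp_zero (jf : Fin n) : colOp jf (0 : Fin n → k) = 1 := by
  ext i c
  by_cases hic : i = c <;> simp [colOp, hic, Matrix.one_apply]

end BruhatAux

namespace BruhatAux
open Matrix hiding IsUpperTriangular
open Finset
variable {k : Type*} [Field k] {n : ℕ}

lemma exists_good (A : Matrix (Fin n) (Fin n) k) (hA : A.det = 1) :
    ∀ j : ℕ, j ≤ n → ∃ u v B : Matrix (Fin n) (Fin n) k, ∃ f : Fin n → Fin n,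
      IsUpperTriangular u ∧ IsUpperTriangular v ∧ u.det = 1 ∧ v.det = 1 ∧
      A = u * B * v ∧
      (∀ l : Fin n, (l : ℕ) < j → B (f l) l ≠ 0) ∧
      (∀ l : Fin n, (l : ℕ) < j → ∀ i, i ≠ f l → B i l = 0) ∧
      (∀ l : Fin n, (l : ℕ) < j → ∀ c, c ≠ l → B (f l) c = 0) := by
  classical
  intro j
  induction j with
  | zero =>
    intro _
    exact ⟨1, 1, A, id, ut_one, ut_one, Matrix.det_one, Matrix.det_one, by simp,
      fun l hl => absurd hl (Nat.not_lt_zero _),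
      fun l hl => absurd hl (Nat.not_lt_zero _),
      fun l hl => absurd hl (Nat.not_lt_zero _)⟩
  | succ j ih =>
    intro hj
    have hjn : j < n := Nat.lt_of_succ_le hj
    obtain ⟨u, v, B, f, hu, hv, hud, hvd, hAuv, hpiv, hcolu, hrowu⟩ := ih hjn.le
    set jf : Fin n := ⟨j, hjn⟩ with hjf
    have hBdet : B.det = 1 := by
      have h := congrArg Matrix.det hAuv
      rw [Matrix.det_mul, Matrix.det_mul, hud, hvd, hA, one_mul, mul_one] at h
      exact h.symm
    have hex : ∃ i, B i jf ≠ 0 := by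
      by_contra h
      push_neg at h
      have h0 : B.det = 0 := Matrix.det_eq_zero_of_column_eq_zero jf h
      rw [hBdet] at h0
      exact one_ne_zero h0
    set S : Finset (Fin n) := Finset.univ.filter (fun i => B i jf ≠ 0) with hSdef
    have hS : S.Nonempty := by
      obtain ⟨i, hi⟩ := hex
      exact ⟨i, Finset.mem_filter.mpr ⟨Finset.mem_univ i, hi⟩⟩
    set r := S.max' hS with hrdef
    have hr : B r jf ≠ 0 := (Finset.mem_filter.mp (S.max'_mem hS)).2
    have hmax : ∀ i, B i jf ≠ 0 → i ≤ r := fun i hi =>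
      S.le_max' i (Finset.mem_filter.mpr ⟨Finset.mem_univ i, hi⟩)
    -- basic facts about already-processed columns/rows
    have hjfl : ∀ l : Fin n, (l : ℕ) < j → jf ≠ l := by
      intro l hl h
      rw [← h] at hl
      exact lt_irrefl _ hl
    have hflzero : ∀ l : Fin n, (l : ℕ) < j → B (f l) jf = 0 :=
      fun l hl => hrowu l hl jf (hjfl l hl)
    have hflr : ∀ l : Fin n, (l : ℕ) < j → f l ≠ r := by
      intro l hl h
      exact hr (h ▸ hflzero l hl)
    have hBrl : ∀ l : Fin n, (l : ℕ) < j → B r l = 0 :=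
      fun l hl => hcolu l hl r (fun h => hflr l hl h.symm)
    -- row operation
    set d : Fin n → k := fun i => - B i jf / B r jf with hddef
    set B₂ := rowOp r d * B with hB2def
    have hB2 : ∀ i c, B₂ i c = B i c + (if i < r then d i * B r c else 0) :=
      fun i c => rowOp_mul_apply r d B i c
    have hB2r : ∀ c, B₂ r c = B r c := by
      intro c
      rw [hB2, if_neg (lt_irrefl r), add_zero]
    have hB2col : ∀ i, i ≠ r → B₂ i jf = 0 := by
      intro i hi
      rcases lt_or_gt_of_ne hi with hlt | hgt
      · rw [hB2, if_pos hlt, hddef]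
        field_simp
        ring
      · rw [hB2, if_neg (not_lt.mpr hgt.le)]
        have : B i jf = 0 := by
          by_contra h
          exact absurd (hmax i h) (not_le.mpr hgt)
        rw [this, add_zero]
    have hB2fl : ∀ l : Fin n, (l : ℕ) < j → ∀ c, B₂ (f l) c = B (f l) c := by
      intro l hl c
      rw [hB2]
      have hd0 : d (f l) = 0 := by
        rw [hddef]
        simp [hflzero l hl]
      rw [hd0]
      simp
    have hB2old : ∀ i, ∀ l : Fin n, (l : ℕ) < j → B₂ i l = B i l := by
      intro i l hl
      rw [hB2, hBrl l hl]
      simp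
    -- column operation
    set e : Fin n → k := fun c => - B₂ r c / B₂ r jf with hedef
    set B₃ := B₂ * colOp jf e with hB3def
    have hB3 : ∀ i c, B₃ i c = B₂ i c + (if jf < c then e c * B₂ i jf else 0) :=
      fun i c => mul_colOp_apply jf e B₂ i c
    have hB3le : ∀ i c, ¬ jf < c → B₃ i c = B₂ i c := by
      intro i c hc
      rw [hB3, if_neg hc, add_zero]
    have hB3r : ∀ c, jf < c → B₃ r c = 0 := by
      intro c hc
      rw [hB3, if_pos hc, hedef]
      have hrjf : B₂ r jf ≠ 0 := by rw [hB2r]; exact hr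
      field_simp
      ring
    have hB3other : ∀ i, i ≠ r → ∀ c, jf < c → B₃ i c = B₂ i c := by
      intro i hi c hc
      rw [hB3, if_pos hc, hB2col i hi, mul_zero, add_zero]
    -- new data
    set f' := Function.update f jf r with hf'def
    refine ⟨u * rowOp r (-d), colOp jf (-e) * v, B₃, f',
      ut_mul hu (rowOp_ut r _), ut_mul (colOp_ut jf _) hv, ?_, ?_, ?_, ?_, ?_, ?_⟩
    · rw [Matrix.det_mul, hud, rowOp_det, one_mul]
    · rw [Matrix.det_mul, hvd, colOp_det, one_mul]
    · -- A = u' * B₃ * v'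
      have h1 : rowOp r (-d) * B₂ = B := by
        rw [hB2def, ← Matrix.mul_assoc, rowOp_mul_rowOp]
        simp [rowOp_zero]
      have h2 : B₃ * colOp jf (-e) = B₂ := by
        rw [hB3def, Matrix.mul_assoc, colOp_mul_colOp]
        simp [colOp_zero]
      rw [hAuv, ← h1, ← h2]
      simp only [Matrix.mul_assoc]
    · -- pivots
      intro l hl
      rcases Nat.lt_succ_iff_lt_or_eq.mp hl with hlj | hlj
      · have hlne : l ≠ jf := fun h => (hjfl l hlj (h.symm)).elim
        rw [hf'def, Function.update_of_ne hlne]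
        rw [hB3le _ _ (by rw [hjf]; exact not_lt.mpr (le_of_lt (show (l:ℕ) < j from hlj) : _)), hB2old _ l hlj]
        exact hpiv l hlj
      · have hljf : l = jf := Fin.ext hlj
        subst hljf
        rw [hf'def, Function.update_self]
        rw [hB3le _ _ (lt_irrefl jf), hB2r]
        exact hr
    · -- column uniqueness
      intro l hl i hi
      rcases Nat.lt_succ_iff_lt_or_eq.mp hl with hlj | hlj
      · have hlne : l ≠ jf := fun h => (hjfl l hlj (h.symm)).elim
        rw [hf'def, Function.update_of_ne hlne] at hi
        rw [hB3le _ _ (not_lt.mpr (le_of_lt (show l < jf from hlj))), hB2old _ l hlj]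
        exact hcolu l hlj i hi
      · have hljf : l = jf := Fin.ext hlj
        subst hljf
        rw [hf'def, Function.update_self] at hi
        rw [hB3le _ _ (lt_irrefl jf)]
        exact hB2col i hi
    · -- row uniqueness
      intro l hl c hc
      rcases Nat.lt_succ_iff_lt_or_eq.mp hl with hlj | hlj
      · have hlne : l ≠ jf := fun h => (hjfl l hlj (h.symm)).elim
        rw [hf'def, Function.update_of_ne hlne]
        by_cases hjc : jf < c
        · rw [hB3other (f l) (hflr l hlj) c hjc, hB2fl l hlj c]
          exact hrowu l hlj c hc
        · rw [hB3le _ _ hjc, hB2fl l hlj c]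
          exact hrowu l hlj c hc
      · have hljf : l = jf := Fin.ext hlj
        subst hljf
        rw [hf'def, Function.update_self]
        by_cases hjc : jf < c
        · exact hB3r c hjc
        · have hcj : c < jf := lt_of_le_of_ne (not_lt.mp hjc) hc
          rw [hB3le _ _ hjc, hB2r]
          exact hBrl c hcj


lemma perm_le {u w M M' : Matrix (Fin n) (Fin n) k} {σ σ' : Equiv.Perm (Fin n)}
    (hu : IsUpperTriangular u) (hwd : ∀ a, w a a ≠ 0)
    (hM : ∀ i j, M i j ≠ 0 ↔ i = σ j) (hM' : ∀ i j, M' i j ≠ 0 ↔ i = σ' j)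
    (heq : u * M = M' * w) (a : Fin n) : σ' a ≤ σ a := by
  have h1 : (u * M) (σ' a) a = u (σ' a) (σ a) * M (σ a) a := by
    rw [Matrix.mul_apply]
    apply Finset.sum_eq_single
    · intro q _ hq
      have hq0 : M q a = 0 := by
        by_contra h; exact hq ((hM q a).mp h)
      rw [hq0, mul_zero]
    · intro h; exact absurd (Finset.mem_univ _) h
  have h2 : (M' * w) (σ' a) a = M' (σ' a) a * w a a := by
    rw [Matrix.mul_apply]
    apply Finset.sum_eq_single
    · intro p _ hp
      have hp0 : M' (σ' a) p = 0 := by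
        by_contra h
        exact hp ((σ'.injective ((hM' _ p).mp h)).symm)
      rw [hp0, zero_mul]
    · intro h; exact absurd (Finset.mem_univ _) h
  have h3 : M' (σ' a) a * w a a ≠ 0 := mul_ne_zero ((hM' _ _).mpr rfl) (hwd a)
  have h4 : u (σ' a) (σ a) ≠ 0 := by
    intro h
    apply h3
    rw [← h2, ← heq, h1, h, zero_mul]
  by_contra hlt
  push_neg at hlt
  exact h4 (hu _ _ hlt)

lemma perm_le' {b₁ b₂ M b₁' b₂' M' : Matrix (Fin n) (Fin n) k} {σ σ' : Equiv.Perm (Fin n)}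
    (hb₁ : IsUpperTriangular b₁) (hb₂ : IsUpperTriangular b₂)
    (hb₁' : IsUpperTriangular b₁') (hb₂' : IsUpperTriangular b₂')
    (hb₁d : b₁.det = 1) (hb₂d : b₂.det = 1) (hb₁d' : b₁'.det = 1) (hb₂d' : b₂'.det = 1)
    (hM : ∀ i j, M i j ≠ 0 ↔ i = σ j) (hM' : ∀ i j, M' i j ≠ 0 ↔ i = σ' j)
    (heq : b₁ * M * b₂ = b₁' * M' * b₂') (a : Fin n) : σ' a ≤ σ a := by
  have hb₂u : IsUnit b₂.det := by rw [hb₂d]; exact isUnit_one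
  have hb₁u' : IsUnit b₁'.det := by rw [hb₁d']; exact isUnit_one
  have hb₂inv : b₂ * b₂⁻¹ = 1 := Matrix.mul_nonsing_inv _ hb₂u
  have hb₁'inv : b₁'⁻¹ * b₁' = 1 := Matrix.nonsing_inv_mul _ hb₁u'
  have hu : IsUpperTriangular (b₁'⁻¹ * b₁) := ut_mul (ut_inv hb₁' hb₁d') hb₁
  have hw : IsUpperTriangular (b₂' * b₂⁻¹) := ut_mul hb₂' (ut_inv hb₂ hb₂d)
  have hwdet : (b₂' * b₂⁻¹).det = 1 := by
    rw [Matrix.det_mul, Matrix.det_nonsing_inv, hb₂d', hb₂d]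
    simp
  have hwd : ∀ a, (b₂' * b₂⁻¹) a a ≠ 0 := ut_diag_ne_zero hw hwdet
  apply perm_le hu hwd hM hM'
  have h := congrArg (fun X => b₁'⁻¹ * X * b₂⁻¹) heq
  simp only [Matrix.mul_assoc] at h ⊢
  rw [hb₂inv, Matrix.mul_one] at h
  rw [h, ← Matrix.mul_assoc, hb₁'inv, Matrix.one_mul]

end BruhatAux


/-- Gelfand–Naimark's Bruhat decomposition for `SL_n(k)`: every `A ∈ SL_n(k)` can be
written as `A = b₁ M b₂` with `b₁, b₂` upper triangular of determinant `1` and `M` a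
monomial matrix of determinant `1` (nonzero entries exactly at the positions `(σ j, j)`
for a permutation `σ`), and the permutation `σ` is uniquely determined by `A`. -/
theorem bruhat_decomposition_SL {k : Type*} [Field k] {n : ℕ} (hn : 1 ≤ n)
    (A : Matrix.SpecialLinearGroup (Fin n) k) :
    ∃! σ : Equiv.Perm (Fin n),
      ∃ b₁ b₂ M : Matrix (Fin n) (Fin n) k,
        IsUpperTriangular b₁ ∧ IsUpperTriangular b₂ ∧
        b₁.det = 1 ∧ b₂.det = 1 ∧ M.det = 1 ∧
        (∀ i j : Fin n, M i j ≠ 0 ↔ i = σ j) ∧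
        (A : Matrix (Fin n) (Fin n) k) = b₁ * M * b₂ := by
  classical
  open BruhatAux in
  obtain ⟨u, v, B, f, hu, hv, hud, hvd, hAuv, hpiv, hcolu, hrowu⟩ :=
    BruhatAux.exists_good (A : Matrix (Fin n) (Fin n) k) A.prop n le_rfl
  have hall : ∀ l : Fin n, (l : ℕ) < n := fun l => l.isLt
  have hinj : Function.Injective f := by
    intro a b hab
    by_contra hne
    have h1 : B (f a) b = 0 := hrowu a (hall a) b (Ne.symm hne)
    have h2 : B (f b) b ≠ 0 := hpiv b (hall b)
    rw [← hab] at h2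
    exact h2 h1
  have hbij : Function.Bijective f := Finite.injective_iff_bijective.mp hinj
  set σ : Equiv.Perm (Fin n) := Equiv.ofBijective f hbij with hσdef
  have hσ : ∀ l, σ l = f l := fun l => rfl
  have hM : ∀ i j, B i j ≠ 0 ↔ i = σ j := by
    intro i jj
    rw [hσ]
    constructor
    · intro h
      by_contra hne
      exact h (hcolu jj (hall jj) i hne)
    · intro h
      rw [h]
      exact hpiv jj (hall jj)
  have hBdet : B.det = 1 := by
    have h := congrArg Matrix.det hAuv
    rw [Matrix.det_mul, Matrix.det_mul, hud, hvd, A.prop, one_mul, mul_one] at h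
    exact h.symm
  refine ⟨σ, ⟨u, v, B, hu, hv, hud, hvd, hBdet, hM, hAuv⟩, ?_⟩
  rintro σ'' ⟨b₁, b₂, M', hb₁, hb₂, hb₁d, hb₂d, hM'd, hM', hA'⟩
  have heq : b₁ * M' * b₂ = u * B * v := hA'.symm.trans hAuv
  refine Equiv.ext fun a => le_antisymm
    (BruhatAux.perm_le' hu hv hb₁ hb₂ hud hvd hb₁d hb₂d hM hM' heq.symm a)
    (BruhatAux.perm_le' hb₁ hb₂ hu hv hb₁d hb₂d hud hvd hM' hM heq a)
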